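/- Let (q₁,q₂,q₃,q₄,q₅) = (1,1,1,-1,-3). For every A ∈ SU(5) there exists h ∈ Sp2 such that Σ_{ℓ=1}^5 (|(Ah)_{ℓ2}|² + |(Ah)_{ℓ4}|²) q_ℓ ≤ 0. -/

import Mathlib

open Finset

noncomputable section

/-- SU(5): 5×5 special unitary complex matrices. -/
def SU5 : Set (Matrix (Fin 5) (Fin 5) ℂ) :=
  {A | A * A.conjTranspose = 1 ∧ A.det = 1}

/-- The image of the embedding Sp(2) ↪ SU(5). -/
def Sp2 : Set (Matrix (Fin 5) (Fin 5) ℂ) :=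
  {h | h ∈ SU5 ∧
    (∀ i : Fin 5, h i 4 = if i = 4 then 1 else 0) ∧
    (∀ i : Fin 5, h 4 i = if i = 4 then 1 else 0) ∧
    (∀ i j : Fin 5, i < 2 → j < 2 →
      h (i + 2) (j + 2) = (starRingEnd ℂ) (h i j) ∧
      h (i + 2) j = -(starRingEnd ℂ) (h i (j + 2)))}

set_option maxHeartbeats 1600000

/-- The Sp(2)-structured matrix with designated columns. -/
def mkH (s w : Fin 4 → ℂ) : Matrix (Fin 5) (Fin 5) ℂ :=
  !![s 0, w 0, -(starRingEnd ℂ) (s 2), -(starRingEnd ℂ) (w 2), 0;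
     s 1, w 1, -(starRingEnd ℂ) (s 3), -(starRingEnd ℂ) (w 3), 0;
     s 2, w 2, (starRingEnd ℂ) (s 0), (starRingEnd ℂ) (w 0), 0;
     s 3, w 3, (starRingEnd ℂ) (s 1), (starRingEnd ℂ) (w 1), 0;
     0, 0, 0, 0, 1]

lemma mkH_mem (s w : Fin 4 → ℂ)
    (Hs : (starRingEnd ℂ) (s 0) * s 0 + (starRingEnd ℂ) (s 1) * s 1 + (starRingEnd ℂ) (s 2) * s 2 + (starRingEnd ℂ) (s 3) * s 3 = 1)
    (Hw : (starRingEnd ℂ) (w 0) * w 0 + (starRingEnd ℂ) (w 1) * w 1 + (starRingEnd ℂ) (w 2) * w 2 + (starRingEnd ℂ) (w 3) * w 3 = 1)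
    (H1 : (starRingEnd ℂ) (s 0) * w 0 + (starRingEnd ℂ) (s 1) * w 1 + (starRingEnd ℂ) (s 2) * w 2 + (starRingEnd ℂ) (s 3) * w 3 = 0)
    (H2 : w 0 * s 2 + w 1 * s 3 - w 2 * s 0 - w 3 * s 1 = 0) :
    mkH s w ∈ Sp2 := by
  have H1' : s 0 * (starRingEnd ℂ) (w 0) + s 1 * (starRingEnd ℂ) (w 1) + s 2 * (starRingEnd ℂ) (w 2) + s 3 * (starRingEnd ℂ) (w 3) = 0 := by
    have := congrArg (starRingEnd ℂ) H1; simpa using this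
  have H2' : (starRingEnd ℂ) (w 0) * (starRingEnd ℂ) (s 2) + (starRingEnd ℂ) (w 1) * (starRingEnd ℂ) (s 3) - (starRingEnd ℂ) (w 2) * (starRingEnd ℂ) (s 0)
      - (starRingEnd ℂ) (w 3) * (starRingEnd ℂ) (s 1) = 0 := by
    have := congrArg (starRingEnd ℂ) H2; simpa using this
  have hu : (mkH s w).conjTranspose * mkH s w = 1 := by
    ext i j
    fin_cases i <;> fin_cases j <;>
      simp [Matrix.mul_apply, Matrix.conjTranspose_apply, Fin.sum_univ_five, mkH,
        Matrix.one_apply] <;>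
      first
        | ring1
        | linear_combination Hs
        | linear_combination Hw
        | linear_combination H1
        | linear_combination H1'
        | linear_combination H2'
        | linear_combination -H2'
        | linear_combination H2 + H2'
        | linear_combination -H2 + H2'
        | linear_combination H2
        | linear_combination -H2
  have hdet : (mkH s w).det = 1 := by
    rw [mkH]
    simp [Matrix.det_succ_row_zero, Fin.sum_univ_succ]
    simp (config := {decide := true}) [Fin.succAbove]
    linear_combination ((starRingEnd ℂ) (w 0) * w 0 + (starRingEnd ℂ) (w 1) * w 1 + (starRingEnd ℂ) (w 2) * w 2 + (starRingEnd ℂ) (w 3) * w 3) * Hs + Hw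
      - (s 0 * (starRingEnd ℂ) (w 0) + s 1 * (starRingEnd ℂ) (w 1) + s 2 * (starRingEnd ℂ) (w 2) + s 3 * (starRingEnd ℂ) (w 3)) * H1
      - ((starRingEnd ℂ) (w 0) * (starRingEnd ℂ) (s 2) + (starRingEnd ℂ) (w 1) * (starRingEnd ℂ) (s 3) - (starRingEnd ℂ) (w 2) * (starRingEnd ℂ) (s 0) - (starRingEnd ℂ) (w 3) * (starRingEnd ℂ) (s 1)) * H2
  refine ⟨⟨mul_eq_one_comm.mp hu, hdet⟩, ?_, ?_, ?_⟩
  · intro i; fin_cases i <;> simp [mkH]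
  · intro i; fin_cases i <;> simp [mkH]
  · intro i j hi hj
    fin_cases i <;> fin_cases j <;>
      first
        | exact absurd hi (by decide)
        | exact absurd hj (by decide)
        | (constructor <;> simp [mkH])

lemma exists_h (w : Fin 4 → ℂ)
    (Hw : (starRingEnd ℂ) (w 0) * w 0 + (starRingEnd ℂ) (w 1) * w 1 + (starRingEnd ℂ) (w 2) * w 2 + (starRingEnd ℂ) (w 3) * w 3 = 1) :
    ∃ h ∈ Sp2, h 0 1 = w 0 ∧ h 1 1 = w 1 ∧ h 2 1 = w 2 ∧ h 3 1 = w 3 ∧ h 4 1 = 0 := by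
  by_cases hx : w 0 = 0 ∧ w 2 = 0
  · refine ⟨mkH ![1,0,0,0] w, mkH_mem _ _ (by simp) Hw (by simp [hx.1]) (by simp [hx.2]), ?_⟩
    refine ⟨by simp [mkH], by simp [mkH], by simp [mkH], by simp [mkH], by simp [mkH]⟩
  · have hr : 0 < Complex.normSq (w 0) + Complex.normSq (w 2) := by
      rcases not_and_or.mp hx with h | h
      · have := Complex.normSq_pos.mpr h
        have := Complex.normSq_nonneg (w 2); linarith
      · have := Complex.normSq_pos.mpr h
        have := Complex.normSq_nonneg (w 0); linarith
    set r : ℝ := Complex.normSq (w 0) + Complex.normSq (w 2) with hrdef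
    set c : ℂ := (Real.sqrt r : ℂ) with hcdef
    have hc : c * c = (r : ℂ) := by
      rw [hcdef, ← Complex.ofReal_mul, Real.mul_self_sqrt hr.le]
    have hc0 : c ≠ 0 := by
      simp [hcdef, Complex.ofReal_ne_zero, Real.sqrt_ne_zero', hr]
    have hcc : (starRingEnd ℂ) c = c := Complex.conj_ofReal _
    have hrc : (r : ℝ) = Complex.normSq (w 0) + Complex.normSq (w 2) := hrdef
    have hrc' : (r : ℂ) = w 0 * (starRingEnd ℂ) (w 0) + w 2 * (starRingEnd ℂ) (w 2) := by
      rw [hrdef]; push_cast [← Complex.mul_conj]; ring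
    set s : Fin 4 → ℂ := ![ -(w 0 * (starRingEnd ℂ) (w 1) + (starRingEnd ℂ) (w 2) * w 3) / c,
      (w 0 * (starRingEnd ℂ) (w 0) + w 2 * (starRingEnd ℂ) (w 2)) / c,
      ((starRingEnd ℂ) (w 0) * w 3 - (starRingEnd ℂ) (w 1) * w 2) / c, 0 ] with hsdef
    have Hs : (starRingEnd ℂ) (s 0) * s 0 + (starRingEnd ℂ) (s 1) * s 1 + (starRingEnd ℂ) (s 2) * s 2 + (starRingEnd ℂ) (s 3) * s 3 = 1 := by
      simp only [hsdef, Matrix.cons_val_zero, Matrix.cons_val_one, Matrix.head_cons,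
        Matrix.cons_val_two, Matrix.tail_cons, Matrix.cons_val_three, map_div₀, hcc]
      field_simp
      simp only [map_add, map_sub, map_neg, map_mul, Complex.conj_conj, map_zero]
      linear_combination (w 0 * (starRingEnd ℂ) (w 0) + w 2 * (starRingEnd ℂ) (w 2)) * Hw - hc - hrc'
    have H1 : (starRingEnd ℂ) (s 0) * w 0 + (starRingEnd ℂ) (s 1) * w 1 + (starRingEnd ℂ) (s 2) * w 2 + (starRingEnd ℂ) (s 3) * w 3 = 0 := by
      simp only [hsdef, Matrix.cons_val_zero, Matrix.cons_val_one, Matrix.head_cons,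
        Matrix.cons_val_two, Matrix.tail_cons, Matrix.cons_val_three, map_div₀, hcc]
      field_simp
      simp only [map_add, map_sub, map_neg, map_mul, Complex.conj_conj, map_zero]
      ring
    have H2 : w 0 * s 2 + w 1 * s 3 - w 2 * s 0 - w 3 * s 1 = 0 := by
      simp only [hsdef, Matrix.cons_val_zero, Matrix.cons_val_one, Matrix.head_cons,
        Matrix.cons_val_two, Matrix.tail_cons, Matrix.cons_val_three]
      field_simp
      ring
    refine ⟨mkH s w, mkH_mem _ _ Hs Hw H1 H2, ?_⟩
    refine ⟨by simp [mkH], by simp [mkH], by simp [mkH], by simp [mkH], by simp [mkH]⟩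

lemma finish_ineq (M : Matrix (Fin 5) (Fin 5) ℂ) (hM : M.conjTranspose * M = 1)
    (key : 1 ≤ Complex.normSq (M 3 1) + 2 * Complex.normSq (M 4 1)) :
    ∑ ℓ : Fin 5, (‖M ℓ 1‖ ^ 2 + ‖M ℓ 3‖ ^ 2) *
        (((![1, 1, 1, -1, -3] : Fin 5 → ℤ) ℓ : ℤ) : ℝ) ≤ 0 := by
  have conjmul : ∀ z : ℂ, star z * z = (Complex.normSq z : ℂ) := fun z => by
    rw [Complex.star_def, mul_comm, Complex.mul_conj]
  have csum : ∀ j : Fin 5, Complex.normSq (M 0 j) + Complex.normSq (M 1 j) +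
      Complex.normSq (M 2 j) + Complex.normSq (M 3 j) + Complex.normSq (M 4 j) = 1 := by
    intro j
    have h := Matrix.ext_iff.mpr hM j j
    rw [Matrix.mul_apply] at h
    simp only [Matrix.conjTranspose_apply] at h
    rw [Fin.sum_univ_five] at h
    simp only [conjmul, Matrix.one_apply_eq] at h
    exact_mod_cast h
  have c1 := csum 1
  have c3 := csum 3
  rw [Fin.sum_univ_five]
  simp only [Complex.sq_norm]
  simp
  linarith [Complex.normSq_nonneg (M 3 1), Complex.normSq_nonneg (M 4 1),
    Complex.normSq_nonneg (M 3 3), Complex.normSq_nonneg (M 4 3), key, c1, c3]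

theorem stmt6 (A : Matrix (Fin 5) (Fin 5) ℂ) (hA : A ∈ SU5) :
    ∃ h ∈ Sp2,
      ∑ ℓ : Fin 5, (‖(A * h) ℓ 1‖ ^ 2 + ‖(A * h) ℓ 3‖ ^ 2) *
        (((![1, 1, 1, -1, -3] : Fin 5 → ℤ) ℓ : ℤ) : ℝ) ≤ 0 := by
  obtain ⟨hA1, hAdet⟩ := hA
  have hA2 : A.conjTranspose * A = 1 := mul_eq_one_comm.mp hA1
  have conjmul : ∀ z : ℂ, z * (starRingEnd ℂ) z = (Complex.normSq z : ℂ) := fun z =>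
    Complex.mul_conj z
  have ent : ∀ i j : Fin 5, A i 0 * (starRingEnd ℂ) (A j 0) + A i 1 * (starRingEnd ℂ) (A j 1) +
      A i 2 * (starRingEnd ℂ) (A j 2) + A i 3 * (starRingEnd ℂ) (A j 3) +
      A i 4 * (starRingEnd ℂ) (A j 4) = (1 : Matrix (Fin 5) (Fin 5) ℂ) i j := by
    intro i j
    have h := Matrix.ext_iff.mpr hA1 i j
    rw [Matrix.mul_apply, Fin.sum_univ_five] at h
    simpa [Matrix.conjTranspose_apply, Complex.star_def] using h
  have rowR : ∀ i : Fin 5, Complex.normSq (A i 0) + Complex.normSq (A i 1) +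
      Complex.normSq (A i 2) + Complex.normSq (A i 3) + Complex.normSq (A i 4) = 1 := by
    intro i
    have h := ent i i
    rw [Matrix.one_apply_eq] at h
    simp only [conjmul] at h
    exact_mod_cast h
  have row43 : A 4 0 * (starRingEnd ℂ) (A 3 0) + A 4 1 * (starRingEnd ℂ) (A 3 1) +
      A 4 2 * (starRingEnd ℂ) (A 3 2) + A 4 3 * (starRingEnd ℂ) (A 3 3) +
      A 4 4 * (starRingEnd ℂ) (A 3 4) = 0 := by
    have h := ent 4 3
    rwa [show (1 : Matrix (Fin 5) (Fin 5) ℂ) 4 3 = 0 by simp [Matrix.one_apply]] at h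
  have colR : Complex.normSq (A 0 4) + Complex.normSq (A 1 4) + Complex.normSq (A 2 4) +
      Complex.normSq (A 3 4) + Complex.normSq (A 4 4) = 1 := by
    have h := Matrix.ext_iff.mpr hA2 4 4
    rw [Matrix.mul_apply, Fin.sum_univ_five] at h
    simp only [Matrix.conjTranspose_apply, Matrix.one_apply_eq, Complex.star_def] at h
    have h' : (Complex.normSq (A 0 4) : ℂ) + Complex.normSq (A 1 4) + Complex.normSq (A 2 4) +
        Complex.normSq (A 3 4) + Complex.normSq (A 4 4) = 1 := by
      rw [← h]; push_cast [← Complex.mul_conj]; ring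
    exact_mod_cast h'
  by_cases hb : Complex.normSq (A 4 4) ≤ 1/2
  · -- use the last row of A
    have hV0 : 0 < Complex.normSq (A 4 0) + Complex.normSq (A 4 1) +
        Complex.normSq (A 4 2) + Complex.normSq (A 4 3) := by
      have := rowR 4; linarith
    set V : ℝ := Complex.normSq (A 4 0) + Complex.normSq (A 4 1) +
        Complex.normSq (A 4 2) + Complex.normSq (A 4 3) with hVdef
    have hVhalf : 1/2 ≤ V := by have := rowR 4; rw [hVdef]; linarith
    set c : ℂ := (Real.sqrt V : ℂ) with hcdef
    have hc : c * c = (V : ℂ) := by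
      rw [hcdef, ← Complex.ofReal_mul, Real.mul_self_sqrt hV0.le]
    have hc0 : c ≠ 0 := by
      simp [hcdef, Complex.ofReal_ne_zero, Real.sqrt_ne_zero', hV0]
    have hcc : (starRingEnd ℂ) c = c := Complex.conj_ofReal _
    have hVc : (V : ℂ) = A 4 0 * (starRingEnd ℂ) (A 4 0) + A 4 1 * (starRingEnd ℂ) (A 4 1) +
        A 4 2 * (starRingEnd ℂ) (A 4 2) + A 4 3 * (starRingEnd ℂ) (A 4 3) := by
      rw [hVdef]; push_cast [← Complex.mul_conj]; ring
    set w : Fin 4 → ℂ := ![(starRingEnd ℂ) (A 4 0) / c, (starRingEnd ℂ) (A 4 1) / c,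
      (starRingEnd ℂ) (A 4 2) / c, (starRingEnd ℂ) (A 4 3) / c] with hwdef
    have Hw : (starRingEnd ℂ) (w 0) * w 0 + (starRingEnd ℂ) (w 1) * w 1 +
        (starRingEnd ℂ) (w 2) * w 2 + (starRingEnd ℂ) (w 3) * w 3 = 1 := by
      simp only [hwdef, Matrix.cons_val_zero, Matrix.cons_val_one, Matrix.head_cons,
        Matrix.cons_val_two, Matrix.tail_cons, Matrix.cons_val_three, map_div₀, hcc,
        Complex.conj_conj]
      field_simp
      linear_combination -hVc - hc
    obtain ⟨h, hSp, e0, e1, e2, e3, e4⟩ := exists_h w Hw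
    refine ⟨h, hSp, ?_⟩
    have hAh : (A * h) * (A * h).conjTranspose = 1 := by
      rw [Matrix.conjTranspose_mul, Matrix.mul_assoc, ← Matrix.mul_assoc h, hSp.1.1,
        Matrix.one_mul, hA1]
    apply finish_ineq _ (mul_eq_one_comm.mp hAh)
    have me41 : (A * h) 4 1 = c := by
      rw [Matrix.mul_apply, Fin.sum_univ_five, e0, e1, e2, e3, e4]
      simp only [hwdef, Matrix.cons_val_zero, Matrix.cons_val_one, Matrix.head_cons,
        Matrix.cons_val_two, Matrix.tail_cons, Matrix.cons_val_three]
      field_simp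
      linear_combination -hVc - hc
    have k41 : Complex.normSq ((A * h) 4 1) = V := by
      rw [me41, hcdef, Complex.normSq_ofReal, Real.mul_self_sqrt hV0.le]
    rw [k41]
    have := Complex.normSq_nonneg ((A * h) 3 1)
    linarith
  · -- use row 3 of A
    push_neg at hb
    have hab : Complex.normSq (A 3 4) + Complex.normSq (A 4 4) ≤ 1 := by
      have := Complex.normSq_nonneg (A 0 4)
      have := Complex.normSq_nonneg (A 1 4)
      have := Complex.normSq_nonneg (A 2 4)
      linarith
    have ha : Complex.normSq (A 3 4) < 1/2 := by linarith
    have hU0 : 0 < Complex.normSq (A 3 0) + Complex.normSq (A 3 1) +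
        Complex.normSq (A 3 2) + Complex.normSq (A 3 3) := by
      have := rowR 3; linarith
    set U : ℝ := Complex.normSq (A 3 0) + Complex.normSq (A 3 1) +
        Complex.normSq (A 3 2) + Complex.normSq (A 3 3) with hUdef
    have hU1 : U + Complex.normSq (A 3 4) = 1 := by
      have := rowR 3; rw [hUdef]; linarith
    set c : ℂ := (Real.sqrt U : ℂ) with hcdef
    have hc : c * c = (U : ℂ) := by
      rw [hcdef, ← Complex.ofReal_mul, Real.mul_self_sqrt hU0.le]
    have hc0 : c ≠ 0 := by
      simp [hcdef, Complex.ofReal_ne_zero, Real.sqrt_ne_zero', hU0]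
    have hcc : (starRingEnd ℂ) c = c := Complex.conj_ofReal _
    have hUc : (U : ℂ) = A 3 0 * (starRingEnd ℂ) (A 3 0) + A 3 1 * (starRingEnd ℂ) (A 3 1) +
        A 3 2 * (starRingEnd ℂ) (A 3 2) + A 3 3 * (starRingEnd ℂ) (A 3 3) := by
      rw [hUdef]; push_cast [← Complex.mul_conj]; ring
    set w : Fin 4 → ℂ := ![(starRingEnd ℂ) (A 3 0) / c, (starRingEnd ℂ) (A 3 1) / c,
      (starRingEnd ℂ) (A 3 2) / c, (starRingEnd ℂ) (A 3 3) / c] with hwdef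
    have Hw : (starRingEnd ℂ) (w 0) * w 0 + (starRingEnd ℂ) (w 1) * w 1 +
        (starRingEnd ℂ) (w 2) * w 2 + (starRingEnd ℂ) (w 3) * w 3 = 1 := by
      simp only [hwdef, Matrix.cons_val_zero, Matrix.cons_val_one, Matrix.head_cons,
        Matrix.cons_val_two, Matrix.tail_cons, Matrix.cons_val_three, map_div₀, hcc,
        Complex.conj_conj]
      field_simp
      linear_combination -hUc - hc
    obtain ⟨h, hSp, e0, e1, e2, e3, e4⟩ := exists_h w Hw
    refine ⟨h, hSp, ?_⟩
    have hAh : (A * h) * (A * h).conjTranspose = 1 := by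
      rw [Matrix.conjTranspose_mul, Matrix.mul_assoc, ← Matrix.mul_assoc h, hSp.1.1,
        Matrix.one_mul, hA1]
    apply finish_ineq _ (mul_eq_one_comm.mp hAh)
    have me31 : (A * h) 3 1 = c := by
      rw [Matrix.mul_apply, Fin.sum_univ_five, e0, e1, e2, e3, e4]
      simp only [hwdef, Matrix.cons_val_zero, Matrix.cons_val_one, Matrix.head_cons,
        Matrix.cons_val_two, Matrix.tail_cons, Matrix.cons_val_three]
      field_simp
      linear_combination -hUc - hc
    have me41 : (A * h) 4 1 = -(A 4 4 * (starRingEnd ℂ) (A 3 4)) / c := by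
      rw [Matrix.mul_apply, Fin.sum_univ_five, e0, e1, e2, e3, e4]
      simp only [hwdef, Matrix.cons_val_zero, Matrix.cons_val_one, Matrix.head_cons,
        Matrix.cons_val_two, Matrix.tail_cons, Matrix.cons_val_three]
      field_simp
      linear_combination row43
    have k31 : Complex.normSq ((A * h) 3 1) = U := by
      rw [me31, hcdef, Complex.normSq_ofReal, Real.mul_self_sqrt hU0.le]
    have k41 : Complex.normSq ((A * h) 4 1) =
        Complex.normSq (A 4 4) * Complex.normSq (A 3 4) / U := by
      rw [me41, Complex.normSq_div, Complex.normSq_neg, Complex.normSq_mul,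
        Complex.normSq_conj, hcdef, Complex.normSq_ofReal, Real.mul_self_sqrt hU0.le]
    rw [k31, k41]
    set a : ℝ := Complex.normSq (A 3 4)
    set b : ℝ := Complex.normSq (A 4 4)
    have ha0 : 0 ≤ a := Complex.normSq_nonneg _
    have hb0 : 0 ≤ b := Complex.normSq_nonneg _
    have h1 : 0 ≤ a * (2*b - 1 + a) := mul_nonneg ha0 (by linarith)
    have h2 : 0 ≤ U*U + 2*(b*a) - U := by nlinarith [h1, hU1]
    have h3 : (U + 2*(b*a/U) - 1)*U = U*U + 2*(b*a) - U := by field_simp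
    nlinarith [h2, h3, hU0]
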